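/- arXiv:1804.01384 — 7 statements merged into one kernel-verified Lean document; each statement's English description precedes it below -/
import Mathlib

section
/- Let X be a nonempty set and S a finite nonempty subset of Der(X). Then SS^{-1} ⊆ Der(X) ∪ {1} if and only if every vertex of the derangement action digraph DA(X,S) has out-valency exactly |S|. -/
/-- SS⁻¹ ⊆ Der(X) ∪ {1} iff every vertex of DA(X,S) has out-valency |S|. -/
theorem stmt1 {X : Type*} [Nonempty X] (S : Finset (Equiv.Perm X)) (hS : S.Nonempty)
    (hDer : ∀ s ∈ S, ∀ x : X, s x ≠ x) :
    (∀ s ∈ S, ∀ t ∈ S, s * t⁻¹ = 1 ∨ ∀ x : X, (s * t⁻¹) x ≠ x) ↔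
      (∀ x : X, {y : X | ∃ s ∈ S, s x = y}.ncard = S.card) := by
  classical
  have hset : ∀ x : X, {y : X | ∃ s ∈ S, s x = y} = ↑(S.image (fun s => s x)) := by
    intro x; ext y; simp
  constructor
  · intro h x
    rw [hset, Set.ncard_coe_finset]
    apply Finset.card_image_of_injOn
    intro s hs t ht hst
    rcases h s hs t ht with h1 | h1
    · exact mul_inv_eq_one.mp h1
    · exact absurd (by simp [Equiv.Perm.mul_apply, hst]) (h1 (t x))
  · intro h s hs t ht
    by_cases hst : s * t⁻¹ = 1
    · exact Or.inl hst
    · refine Or.inr fun y hy => hst ?_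
      rw [mul_inv_eq_one]
      have hx : s (t⁻¹ y) = t (t⁻¹ y) := by
        have : s (t⁻¹ y) = y := hy
        rw [this]; exact (Equiv.apply_symm_apply t y).symm
      have hinj : Set.InjOn (fun s : Equiv.Perm X => s (t⁻¹ y)) S := by
        apply Finset.injOn_of_card_image_eq
        have := h (t⁻¹ y)
        rw [hset, Set.ncard_coe_finset] at this
        exact this
      exact hinj hs ht hx
end

section
/- Let X be a nonempty set and S a finite nonempty subset of Der(X). Then SS^{-1} ⊆ Der(X) ∪ {1} if and only if every vertex of DA(X,S) has in-valency exactly |S|. -/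
/-- SS⁻¹ ⊆ Der(X) ∪ {1} iff every vertex of DA(X,S) has in-valency |S|. -/
theorem stmt2 {X : Type*} [Nonempty X] (S : Finset (Equiv.Perm X)) (hS : S.Nonempty)
    (hDer : ∀ s ∈ S, ∀ x : X, s x ≠ x) :
    (∀ s ∈ S, ∀ t ∈ S, s * t⁻¹ = 1 ∨ ∀ x : X, (s * t⁻¹) x ≠ x) ↔
      (∀ y : X, {x : X | ∃ s ∈ S, s x = y}.ncard = S.card) := by
  classical
  have hset : ∀ y : X, {x : X | ∃ s ∈ S, s x = y}
      = ↑(S.image fun s : Equiv.Perm X => s⁻¹ y) := by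
    intro y
    ext x
    simp only [Set.mem_setOf_eq, Finset.coe_image, Set.mem_image, Finset.mem_coe]
    constructor
    · rintro ⟨s, hs, hsx⟩
      exact ⟨s, hs, by simp [← hsx]⟩
    · rintro ⟨s, hs, hsx⟩
      exact ⟨s, hs, by simp [← hsx]⟩
  have hcard : ∀ y : X, {x : X | ∃ s ∈ S, s x = y}.ncard
      = (S.image fun s : Equiv.Perm X => s⁻¹ y).card := by
    intro y; rw [hset y, Set.ncard_coe_finset]
  constructor
  · intro h y
    rw [hcard y]
    rw [Finset.card_image_iff.mpr]
    intro s hs t ht hst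
    simp only [Finset.mem_coe] at hs ht
    rcases h s hs t ht with h1 | h1
    · rw [← mul_inv_eq_one]; exact h1
    · exfalso
      apply h1 y
      simp only [Equiv.Perm.mul_apply]
      simp only at hst
      rw [← hst]
      simp
  · intro h s hs t ht
    by_cases hst : s = t
    · left; simp [hst]
    · right
      intro x hx
      have hinj : Set.InjOn (fun u : Equiv.Perm X => u⁻¹ x) ↑S :=
        Finset.card_image_iff.mp (by rw [← hcard x]; exact h x)
      apply hst
      apply hinj hs ht
      simp only [Equiv.Perm.mul_apply] at hx
      have hts : t⁻¹ x = s⁻¹ x := by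
        have := congrArg s.symm hx
        simpa [Equiv.Perm.inv_def] using this
      simp only [hts]
end

section
/- Let X be a nonempty set and S a finite nonempty subset of Der(X). Then DA(X,S) is a simple undirected graph that is regular of valency |S| if and only if S is closed, i.e., x^S = x^{S^{-1}} for all x ∈ X and SS^{-1} ⊆ Der(X) ∪ {1}. -/
private lemma eval_set_eq {X : Type*} [DecidableEq X] (S : Finset (Equiv.Perm X)) (x : X) :
    {y : X | ∃ s ∈ S, s x = y} = ↑(S.image fun s : Equiv.Perm X => s x) := by
  ext y; simp [eq_comm]

private lemma inv_eval_set_eq {X : Type*} [DecidableEq X] (S : Finset (Equiv.Perm X)) (y : X) :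
    {x : X | ∃ s ∈ S, s x = y} = ↑(S.image fun s : Equiv.Perm X => s⁻¹ y) := by
  ext x
  simp only [Set.mem_setOf_eq, Finset.coe_image, Set.mem_image, Finset.mem_coe]
  constructor
  · rintro ⟨s, hs, rfl⟩; exact ⟨s, hs, by simp⟩
  · rintro ⟨s, hs, rfl⟩; exact ⟨s, hs, by simp⟩

/-- DA(X,S) is a simple undirected graph, regular of valency |S|, iff S is closed. -/
theorem stmt4 {X : Type*} [Nonempty X] (S : Finset (Equiv.Perm X)) (hS : S.Nonempty)
    (hDer : ∀ s ∈ S, ∀ x : X, s x ≠ x) :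
    ((∀ x y : X, (∃ s ∈ S, s x = y) → (∃ s ∈ S, s y = x)) ∧
      (∀ x : X, {y : X | ∃ s ∈ S, s x = y}.ncard = S.card) ∧
      (∀ y : X, {x : X | ∃ s ∈ S, s x = y}.ncard = S.card)) ↔
      ((∀ x : X, {y : X | ∃ s ∈ S, s x = y} = {y : X | ∃ s ∈ S, s⁻¹ x = y}) ∧
        (∀ s ∈ S, ∀ t ∈ S, s * t⁻¹ = 1 ∨ ∀ x : X, (s * t⁻¹) x ≠ x)) := by
  classical
  constructor
  · rintro ⟨hA, hB, _⟩
    have hinj : ∀ z : X, ∀ s ∈ S, ∀ t ∈ S, s z = t z → s = t := by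
      intro z s hs t ht hst
      have h1 : (S.image fun u : Equiv.Perm X => u z).card = S.card := by
        rw [← hB z, eval_set_eq, Set.ncard_coe_finset]
      have h2 := Finset.card_image_iff.mp h1
      exact h2 hs ht hst
    refine ⟨?_, ?_⟩
    · intro x
      ext y
      simp only [Set.mem_setOf_eq]
      constructor
      · rintro ⟨s, hs, rfl⟩
        obtain ⟨t, ht, htx⟩ := hA x (s x) ⟨s, hs, rfl⟩
        exact ⟨t, ht, by rw [Equiv.Perm.inv_eq_iff_eq]; exact htx.symm⟩
      · rintro ⟨s, hs, rfl⟩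
        exact hA (s⁻¹ x) x ⟨s, hs, by simp⟩
    · intro s hs t ht
      by_cases h : s * t⁻¹ = 1
      · exact Or.inl h
      · refine Or.inr fun x hx => h ?_
        have hst : s (t⁻¹ x) = t (t⁻¹ x) := by
          simpa using hx
        have := hinj (t⁻¹ x) s hs t ht hst
        rw [this, mul_inv_cancel]
  · rintro ⟨h1, h2⟩
    have hinj : ∀ z : X, Set.InjOn (fun s : Equiv.Perm X => s z) ↑S := by
      intro z s hs t ht hst
      rcases h2 s hs t ht with h | h
      · exact mul_inv_eq_one.mp h
      · exfalso
        exact h (t z) (by simpa using hst)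
    refine ⟨?_, ?_, ?_⟩
    · intro x y ⟨s, hs, hsx⟩
      have : y ∈ {y : X | ∃ s ∈ S, s⁻¹ x = y} := by
        rw [← h1 x]; exact ⟨s, hs, hsx⟩
      obtain ⟨t, ht, hty⟩ := this
      exact ⟨t, ht, by rw [← hty]; simp⟩
    · intro x
      rw [eval_set_eq, Set.ncard_coe_finset]
      exact Finset.card_image_iff.mpr (hinj x)
    · intro y
      rw [inv_eval_set_eq, Set.ncard_coe_finset]
      apply Finset.card_image_iff.mpr
      intro s hs t ht hst
      simp only at hst
      rcases h2 s (by simpa using hs) t (by simpa using ht) with h | h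
      · exact mul_inv_eq_one.mp h
      · exfalso
        apply h y
        simp only [Equiv.Perm.mul_apply]
        rw [← hst]
        simp
end

section
/- Every finite simple regular graph of even valency 2n (n ≥ 1) can be expressed as DA(X,S) for some closed, self-inverse subset S ⊆ Der(X). -/
open Finset


lemma hall_perm {X : Type*} [Fintype X] [DecidableEq X] (D : Finset (X × X)) (k : ℕ)
    (hk : 1 ≤ k)
    (hout : ∀ x, (D.filter (fun p => p.1 = x)).card = k)
    (hin : ∀ x, (D.filter (fun p => p.2 = x)).card = k) :
    ∃ f : X → X, Function.Bijective f ∧ ∀ x, (x, f x) ∈ D := by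
  classical
  set t : X → Finset X := fun x => (D.filter (fun p => p.1 = x)).image Prod.snd with ht
  have hall : ∀ s : Finset X, s.card ≤ (s.biUnion t).card := by
    intro s
    have h1 : (D.filter (fun p => p.1 ∈ s)).card = k * s.card := by
      rw [Finset.card_eq_sum_card_fiberwise (f := Prod.fst) (s := D.filter (fun p => p.1 ∈ s)) (t := s)
        (fun p hp => (mem_filter.mp hp).2)]
      rw [Finset.sum_congr rfl (fun x hx => ?_), Finset.sum_const, smul_eq_mul, mul_comm]
      rw [Finset.filter_filter]
      rw [show (D.filter fun p => p.1 ∈ s ∧ p.1 = x) = D.filter (fun p => p.1 = x) from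
        Finset.filter_congr (fun p _ => by constructor <;> intro h <;> simp_all)]
      exact hout x
    have h2 : (D.filter (fun p => p.2 ∈ s.biUnion t)).card = k * (s.biUnion t).card := by
      rw [Finset.card_eq_sum_card_fiberwise (f := Prod.snd) (s := D.filter (fun p => p.2 ∈ s.biUnion t)) (t := s.biUnion t)
        (fun p hp => (mem_filter.mp hp).2)]
      rw [Finset.sum_congr rfl (fun x hx => ?_), Finset.sum_const, smul_eq_mul, mul_comm]
      rw [Finset.filter_filter]
      rw [show (D.filter fun p => p.2 ∈ s.biUnion t ∧ p.2 = x) = D.filter (fun p => p.2 = x) from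
        Finset.filter_congr (fun p _ => by constructor <;> intro h <;> simp_all)]
      exact hin x
    have hsub : D.filter (fun p => p.1 ∈ s) ⊆ D.filter (fun p => p.2 ∈ s.biUnion t) := by
      intro p hp
      rw [mem_filter] at hp ⊢
      refine ⟨hp.1, Finset.mem_biUnion.mpr ⟨p.1, hp.2, ?_⟩⟩
      exact Finset.mem_image.mpr ⟨p, mem_filter.mpr ⟨hp.1, rfl⟩, rfl⟩
    have := Finset.card_le_card hsub
    rw [h1, h2] at this
    exact Nat.le_of_mul_le_mul_left this hk
  obtain ⟨f, hfinj, hf⟩ := (Finset.all_card_le_biUnion_card_iff_exists_injective t).mp hall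
  refine ⟨f, Finite.injective_iff_bijective.mp hfinj, fun x => ?_⟩
  obtain ⟨p, hp, hps⟩ := Finset.mem_image.mp (hf x)
  obtain ⟨hpD, hp1⟩ := mem_filter.mp hp
  have : p = (x, f x) := Prod.ext hp1 hps
  rwa [this] at hpD

lemma decomp {X : Type*} [Fintype X] [DecidableEq X] : ∀ (k : ℕ) (D : Finset (X × X)),
    (∀ p ∈ D, p.1 ≠ p.2) →
    (∀ x, (D.filter (fun p => p.1 = x)).card = k) →
    (∀ x, (D.filter (fun p => p.2 = x)).card = k) →
    ∃ S0 : Finset (Equiv.Perm X),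
      (∀ σ ∈ S0, ∀ x, σ x ≠ x) ∧
      (∀ σ ∈ S0, ∀ τ ∈ S0, ∀ x : X, σ x = τ x → σ = τ) ∧
      (∀ p : X × X, p ∈ D ↔ ∃ σ ∈ S0, σ p.1 = p.2) := by
  intro k
  induction k with
  | zero =>
    intro D hloop hout hin
    refine ⟨∅, by simp, by simp, fun p => ?_⟩
    simp only [Finset.notMem_empty, false_and, exists_false, iff_false]
    intro hp
    have : p ∈ D.filter (fun q => q.1 = p.1) := mem_filter.mpr ⟨hp, rfl⟩
    have h0 := hout p.1
    rw [Finset.card_eq_zero] at h0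
    simp [h0] at this
  | succ k ih =>
    intro D hloop hout hin
    obtain ⟨f, hbij, hf⟩ := hall_perm D (k+1) (Nat.succ_le_succ (Nat.zero_le k)) hout hin
    set σ : Equiv.Perm X := Equiv.ofBijective f hbij with hσ
    have hσapp : ∀ x, σ x = f x := fun x => rfl
    set G : Finset (X × X) := univ.image (fun x => (x, σ x)) with hG
    have hmemG : ∀ p : X × X, p ∈ G ↔ σ p.1 = p.2 := by
      intro p
      simp only [hG, Finset.mem_image, Finset.mem_univ, true_and]
      constructor
      · rintro ⟨x, hx⟩; rw [← hx]
      · intro h; exact ⟨p.1, Prod.ext rfl h⟩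
    have hGD : G ⊆ D := by
      intro p hp
      have := (hmemG p).mp hp
      have : p = (p.1, f p.1) := Prod.ext rfl ((hσapp p.1 ▸ this).symm)
      rw [this]; exact hf p.1
    set D' : Finset (X × X) := D \ G with hD'
    have hout' : ∀ x, (D'.filter (fun p => p.1 = x)).card = k := by
      intro x
      have he : D'.filter (fun p => p.1 = x) = (D.filter (fun p => p.1 = x)).erase (x, σ x) := by
        ext p
        simp only [hD', Finset.mem_filter, Finset.mem_sdiff, Finset.mem_erase, hmemG p]
        constructor
        · rintro ⟨⟨hpD, hpG⟩, h1⟩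
          exact ⟨fun h => hpG (by rw [h]), hpD, h1⟩
        · rintro ⟨hne, hpD, h1⟩
          refine ⟨⟨hpD, fun h => hne ?_⟩, h1⟩
          exact Prod.ext h1 (by rw [← h, h1])
      have hm : (x, σ x) ∈ D.filter (fun p => p.1 = x) :=
        mem_filter.mpr ⟨hGD ((hmemG (x, σ x)).mpr rfl), rfl⟩
      rw [he, Finset.card_erase_of_mem hm, hout x]
      omega
    have hin' : ∀ x, (D'.filter (fun p => p.2 = x)).card = k := by
      intro x
      have he : D'.filter (fun p => p.2 = x) = (D.filter (fun p => p.2 = x)).erase (σ⁻¹ x, x) := by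
        ext p
        simp only [hD', Finset.mem_filter, Finset.mem_sdiff, Finset.mem_erase, hmemG p]
        constructor
        · rintro ⟨⟨hpD, hpG⟩, h2⟩
          refine ⟨fun h => hpG ?_, hpD, h2⟩
          · rw [h]; simp [h2]
        · rintro ⟨hne, hpD, h2⟩
          refine ⟨⟨hpD, fun h => hne ?_⟩, h2⟩
          have : p.1 = σ⁻¹ x := by
            have hx' : σ p.1 = x := h.trans h2
            exact (Equiv.eq_symm_apply σ).mpr hx'
          exact Prod.ext this h2
      have hm : (σ⁻¹ x, x) ∈ D.filter (fun p => p.2 = x) :=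
        mem_filter.mpr ⟨hGD ((hmemG (σ⁻¹ x, x)).mpr (by show σ (σ⁻¹ x) = x; simp)), rfl⟩
      rw [he, Finset.card_erase_of_mem hm, hin x]
      omega
    obtain ⟨S0, hfpf, hpair, harcs⟩ := ih D' (fun p hp => hloop p (Finset.sdiff_subset hp))
      hout' hin'
    refine ⟨insert σ S0, ?_, ?_, ?_⟩
    · intro τ hτ x
      rcases Finset.mem_insert.mp hτ with h | h
      · rw [h]
        exact fun hfix => hloop (x, σ x) (hGD ((hmemG (x, σ x)).mpr rfl)) hfix.symm
      · exact hfpf τ h x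
    · intro τ hτ τ' hτ' x hx
      rcases Finset.mem_insert.mp hτ with h | h <;> rcases Finset.mem_insert.mp hτ' with h' | h'
      · rw [h, h']
      · exfalso
        have h1 : (x, τ' x) ∈ D' := (harcs (x, τ' x)).mpr ⟨τ', h', rfl⟩
        have h2 : (x, τ' x) ∈ G := (hmemG (x, τ' x)).mpr (by show σ x = τ' x; rw [← h]; exact hx)
        exact (Finset.mem_sdiff.mp h1).2 h2
      · exfalso
        have h1 : (x, τ x) ∈ D' := (harcs (x, τ x)).mpr ⟨τ, h, rfl⟩
        have h2 : (x, τ x) ∈ G := (hmemG (x, τ x)).mpr (by show σ x = τ x; rw [← h']; exact hx.symm)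
        exact (Finset.mem_sdiff.mp h1).2 h2
      · exact hpair τ h τ' h' x hx
    · intro p
      constructor
      · intro hp
        by_cases hg : p ∈ G
        · exact ⟨σ, Finset.mem_insert_self _ _, (hmemG p).mp hg⟩
        · obtain ⟨τ, hτ, hτp⟩ := (harcs p).mp (Finset.mem_sdiff.mpr ⟨hp, hg⟩)
          exact ⟨τ, Finset.mem_insert_of_mem hτ, hτp⟩
      · rintro ⟨τ, hτ, hτp⟩
        rcases Finset.mem_insert.mp hτ with h | h
        · subst h; exact hGD ((hmemG p).mpr hτp)
        · exact Finset.sdiff_subset ((harcs p).mpr ⟨τ, h, hτp⟩)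

lemma orient {X : Type*} [Fintype X] [DecidableEq X] (AF : Finset (X × X)) (n : ℕ)
    (hsimple : ∀ p ∈ AF, p.1 ≠ p.2)
    (hsym : ∀ p ∈ AF, (p.2, p.1) ∈ AF)
    (hreg : ∀ x : X, (univ.filter (fun y => (x, y) ∈ AF)).card = 2 * n) :
    ∃ D : Finset (X × X),
      (∀ p ∈ D, p ∈ AF) ∧
      (∀ p ∈ AF, p ∈ D ∨ (p.2, p.1) ∈ D) ∧
      (∀ p ∈ D, (p.2, p.1) ∉ D) ∧
      (∀ x, (D.filter (fun p => p.1 = x)).card = n) ∧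
      (∀ x, (D.filter (fun p => p.2 = x)).card = n) := by
  classical
  letI : LinearOrder X := LinearOrder.lift' (Fintype.equivFin X) (Equiv.injective _)
  set E : Finset (X × X) := AF.filter (fun p => p.1 < p.2) with hE
  set inc : X → Finset (X × X) := fun x => E.filter (fun e => e.1 = x ∨ e.2 = x) with hinc
  -- each vertex is incident to exactly 2n edges
  have hdegE : ∀ x, (inc x).card = 2 * n := by
    intro x
    rw [← hreg x]
    symm
    apply Finset.card_bij (fun y _ => if x < y then (x, y) else (y, x))
    · intro y hy
      have hyA : (x, y) ∈ AF := (mem_filter.mp hy).2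
      have hne : x ≠ y := hsimple _ hyA
      rcases hne.lt_or_gt with h | h
      · rw [if_pos h]
        exact mem_filter.mpr ⟨mem_filter.mpr ⟨hyA, h⟩, Or.inl rfl⟩
      · rw [if_neg (asymm h)]
        exact mem_filter.mpr ⟨mem_filter.mpr ⟨hsym _ hyA, h⟩, Or.inr rfl⟩
    · intro y hy y' hy' hh
      have hyA : (x, y) ∈ AF := (mem_filter.mp hy).2
      have hyA' : (x, y') ∈ AF := (mem_filter.mp hy').2
      by_cases h : x < y <;> by_cases h' : x < y'
      · rw [if_pos h, if_pos h'] at hh; exact (Prod.ext_iff.mp hh).2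
      · rw [if_pos h, if_neg h'] at hh
        exact absurd (Prod.ext_iff.mp hh).2.symm (hsimple _ hyA)
      · rw [if_neg h, if_pos h'] at hh
        exact absurd (Prod.ext_iff.mp hh).1 (hsimple _ hyA).symm
      · rw [if_neg h, if_neg h'] at hh
        exact (Prod.ext_iff.mp hh).1
    · intro e he
      obtain ⟨heE, hine⟩ := mem_filter.mp he
      obtain ⟨heA, hlt⟩ := mem_filter.mp heE
      rcases hine with h1 | h2
      · refine ⟨e.2, mem_filter.mpr ⟨mem_univ _, ?_⟩, ?_⟩
        · rw [← h1, Prod.mk.eta]; exact heA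
        · rw [if_pos (h1 ▸ hlt)]; exact Prod.ext h1.symm rfl
      · refine ⟨e.1, mem_filter.mpr ⟨mem_univ _, ?_⟩, ?_⟩
        · rw [← h2]; exact hsym _ heA
        · rw [if_neg (asymm (h2 ▸ hlt))]; exact Prod.ext rfl h2.symm
  -- counting edges
  have hfilt2 : ∀ e ∈ E, (univ.filter (fun x => e.1 = x ∨ e.2 = x)).card = 2 := by
    intro e he
    have hne : e.1 ≠ e.2 := ne_of_lt (mem_filter.mp he).2
    have : univ.filter (fun x => e.1 = x ∨ e.2 = x) = {e.1, e.2} := by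
      ext z
      simp only [mem_filter, mem_univ, true_and, mem_insert, mem_singleton]
      constructor
      · rintro (h | h) <;> simp [h.symm]
      · rintro (h | h) <;> simp [h]
    rw [this, Finset.card_insert_of_notMem (by simpa using hne), Finset.card_singleton]
  have hswap : ∀ (M : Finset (X × X)) (V : Finset X),
      ∑ x ∈ V, (M.filter (fun e => e.1 = x ∨ e.2 = x)).card
      = ∑ e ∈ M, (V.filter (fun x => e.1 = x ∨ e.2 = x)).card := by
    intro M V
    simp only [Finset.card_filter]
    exact Finset.sum_comm
  have hcardE : 2 * E.card = 2 * n * Fintype.card X := by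
    have h1 : ∑ x ∈ univ, (inc x).card = ∑ e ∈ E, (univ.filter (fun x => e.1 = x ∨ e.2 = x)).card :=
      hswap E univ
    rw [Finset.sum_congr rfl (fun x _ => hdegE x), Finset.sum_congr rfl hfilt2, Finset.sum_const,
      Finset.sum_const, card_univ, smul_eq_mul, smul_eq_mul] at h1
    rw [mul_comm 2 E.card, ← h1, mul_comm]
  -- Hall condition
  set t : X × Fin n → Finset (X × X) := fun z => inc z.1 with htdef
  have hall : ∀ T : Finset (X × Fin n), T.card ≤ (T.biUnion t).card := by
    intro T
    set W : Finset X := T.image Prod.fst with hW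
    set B : Finset (X × X) := T.biUnion t with hB
    have hTW : T.card ≤ W.card * n := by
      calc T.card ≤ (W ×ˢ (univ : Finset (Fin n))).card :=
            card_le_card (fun z hz => mem_product.mpr ⟨mem_image_of_mem _ hz, mem_univ _⟩)
        _ = W.card * n := by rw [card_product, card_univ, Fintype.card_fin]
    have hIncB : ∀ x ∈ W, inc x ⊆ B := by
      intro x hx e he
      obtain ⟨z, hz, hzx⟩ := mem_image.mp hx
      exact mem_biUnion.mpr ⟨z, hz, by rw [htdef]; simpa [hzx] using he⟩
    have hBE : B ⊆ E := by
      intro e he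
      obtain ⟨z, _, hze⟩ := mem_biUnion.mp he
      exact (mem_filter.mp hze).1
    have hinc_eq : ∀ x ∈ W, inc x = B.filter (fun e => e.1 = x ∨ e.2 = x) := by
      intro x hx
      ext e
      simp only [hinc, mem_filter]
      constructor
      · rintro ⟨heE, h⟩
        exact ⟨hIncB x hx (mem_filter.mpr ⟨heE, h⟩), h⟩
      · rintro ⟨heB, h⟩
        exact ⟨hBE heB, h⟩
    have key : 2 * n * W.card ≤ 2 * B.card := by
      have h1 : ∑ x ∈ W, (inc x).card = 2 * n * W.card := by
        rw [Finset.sum_congr rfl (fun x _ => hdegE x), Finset.sum_const, smul_eq_mul, mul_comm]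
      have h2 : ∑ x ∈ W, (inc x).card
          = ∑ e ∈ B, (W.filter (fun x => e.1 = x ∨ e.2 = x)).card := by
        rw [Finset.sum_congr rfl (fun x hx => by rw [hinc_eq x hx])]
        exact hswap B W
      have h3 : ∑ e ∈ B, (W.filter (fun x => e.1 = x ∨ e.2 = x)).card ≤ ∑ e ∈ B, 2 := by
        apply Finset.sum_le_sum
        intro e he
        calc (W.filter (fun x => e.1 = x ∨ e.2 = x)).card
            ≤ ({e.1, e.2} : Finset X).card := by
              apply card_le_card
              intro x hx
              have := (mem_filter.mp hx).2
              simp only [mem_insert, mem_singleton]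
              tauto
          _ ≤ 2 := by
              apply le_trans (Finset.card_insert_le _ _)
              simp
      rw [← h1, h2]
      calc ∑ e ∈ B, (W.filter (fun x => e.1 = x ∨ e.2 = x)).card ≤ ∑ e ∈ B, 2 := h3
        _ = 2 * B.card := by rw [Finset.sum_const, smul_eq_mul, mul_comm]
    have hWB : W.card * n ≤ B.card := by
      have : 2 * (W.card * n) ≤ 2 * B.card := by
        calc 2 * (W.card * n) = 2 * n * W.card := by ring
          _ ≤ 2 * B.card := key
      omega
    exact hTW.trans hWB
  obtain ⟨f, hfinj, hf⟩ := (Finset.all_card_le_biUnion_card_iff_exists_injective t).mp hall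
  have hfinc : ∀ z, f z ∈ inc z.1 := hf
  have hfE : ∀ z, f z ∈ E := fun z => (mem_filter.mp (hfinc z)).1
  have hflt : ∀ z, (f z).1 < (f z).2 := fun z => (mem_filter.mp (hfE z)).2
  have hfor : ∀ z : X × Fin n, (f z).1 = z.1 ∨ (f z).2 = z.1 := fun z =>
    (mem_filter.mp (hfinc z)).2
  -- image of f is all of E
  have himg : (univ : Finset (X × Fin n)).image f = E := by
    apply Finset.eq_of_subset_of_card_le
    · intro e he
      obtain ⟨z, _, hze⟩ := mem_image.mp he
      exact hze ▸ hfE z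
    · have h2 : 2 * E.card = 2 * (Fintype.card X * n) := by rw [hcardE]; ring
      rw [Finset.card_image_of_injective _ hfinj, card_univ, Fintype.card_prod,
        Fintype.card_fin]
      omega
  set g : X × Fin n → X × X := fun z => if (f z).1 = z.1 then f z else ((f z).2, (f z).1)
    with hgdef
  have hg1 : ∀ z, (g z).1 = z.1 := by
    intro z
    rw [hgdef]
    by_cases h : (f z).1 = z.1
    · simp [h]
    · rcases hfor z with h' | h'
      · exact absurd h' h
      · simp [h, h']
  set sort : X × X → X × X := fun a => if a.1 < a.2 then a else (a.2, a.1) with hsortdef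
  have hsortg : ∀ z, sort (g z) = f z := by
    intro z
    have hlt := hflt z
    simp only [hgdef, hsortdef]
    by_cases h : (f z).1 = z.1
    · rw [if_pos h, if_pos hlt]
    · rw [if_neg h,
        if_neg (show ¬((f z).2, (f z).1).1 < ((f z).2, (f z).1).2 from asymm hlt)]
  have hginj : Function.Injective g := fun z z' h => hfinj (by rw [← hsortg, ← hsortg, h])
  set D : Finset (X × X) := univ.image g with hD
  have hmemD : ∀ p : X × X, p ∈ D ↔ ∃ z, g z = p := by
    intro p
    simp [hD]
  have hDA : ∀ p ∈ D, p ∈ AF := by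
    intro p hp
    obtain ⟨z, hz⟩ := (hmemD p).mp hp
    have heA : f z ∈ AF := (mem_filter.mp (hfE z)).1
    rw [← hz, hgdef]
    by_cases h : (f z).1 = z.1
    · simpa [h] using heA
    · simp only [if_neg h]
      exact hsym _ heA
  have hloopD : ∀ p ∈ D, p.1 ≠ p.2 := fun p hp => hsimple p (hDA p hp)
  have hsort_of : ∀ p ∈ D, ∃ z, g z = p ∧ sort p = f z := by
    intro p hp
    obtain ⟨z, hz⟩ := (hmemD p).mp hp
    exact ⟨z, hz, by rw [← hz, hsortg]⟩
  have hsortswap : ∀ a : X × X, sort (a.2, a.1) = sort a := by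
    intro a
    simp only [hsortdef]
    rcases lt_trichotomy a.1 a.2 with h | h | h
    · rw [if_pos h, if_neg (show ¬(a.2, a.1).1 < (a.2, a.1).2 from asymm h)]
    · rw [if_neg (show ¬(a.2, a.1).1 < (a.2, a.1).2 from by simp [h]),
        if_neg (show ¬a.1 < a.2 from by simp [h])]
      exact Prod.ext h h.symm
    · rw [if_pos (show (a.2, a.1).1 < (a.2, a.1).2 from h), if_neg (asymm h)]
  have hrev : ∀ p ∈ D, (p.2, p.1) ∉ D := by
    intro p hp hswp
    obtain ⟨z, hz, hsz⟩ := hsort_of p hp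
    obtain ⟨z', hz', hsz'⟩ := hsort_of _ hswp
    have : f z' = f z := by
      rw [← hsz', ← hsz]
      exact hsortswap p
    have hzz : z' = z := hfinj this
    rw [hzz, hz] at hz'
    have : p.1 = p.2 := (Prod.ext_iff.mp hz'.symm).1.symm
    exact hloopD p hp this
  have hcover : ∀ p ∈ AF, p ∈ D ∨ (p.2, p.1) ∈ D := by
    intro p hp
    have hne : p.1 ≠ p.2 := hsimple p hp
    have heE : sort p ∈ E := by
      simp only [hsortdef]
      by_cases h : p.1 < p.2
      · rw [if_pos h]
        exact mem_filter.mpr ⟨hp, h⟩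
      · rcases hne.lt_or_gt with h' | h'
        · exact absurd h' h
        · rw [if_neg h]
          exact mem_filter.mpr ⟨hsym _ hp, h'⟩
    obtain ⟨z, _, hze⟩ := mem_image.mp (himg ▸ heE)
    have hgz : g z = sort p ∨ g z = ((sort p).2, (sort p).1) := by
      simp only [hgdef]
      rw [← hze]
      by_cases h : (f z).1 = z.1
      · left; rw [if_pos h]
      · right; rw [if_neg h]
    have hsp : sort p = p ∨ sort p = (p.2, p.1) := by
      rw [hsortdef]
      by_cases h : p.1 < p.2
      · left; simp [h]
      · right; simp [h]
    have hzD : g z ∈ D := (hmemD _).mpr ⟨z, rfl⟩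
    rcases hsp with h | h
    · rcases hgz with h' | h'
      · left
        have hgp : g z = p := h'.trans h
        rw [← hgp]; exact hzD
      · right
        have hgp : g z = (p.2, p.1) := h'.trans (by rw [h])
        rw [← hgp]; exact hzD
    · rcases hgz with h' | h'
      · right
        have hgp : g z = (p.2, p.1) := h'.trans h
        rw [← hgp]; exact hzD
      · left
        have hgp : g z = p := h'.trans (by rw [h])
        rw [← hgp]; exact hzD
  -- out-degree n
  have hout : ∀ x, (D.filter (fun p => p.1 = x)).card = n := by
    intro x
    have heq : D.filter (fun p => p.1 = x)
        = (univ.filter (fun z : X × Fin n => z.1 = x)).image g := by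
      ext a
      simp only [mem_filter, mem_image, mem_univ, true_and]
      constructor
      · rintro ⟨ha, hax⟩
        obtain ⟨z, hz⟩ := (hmemD a).mp ha
        exact ⟨z, by rw [← hg1 z, hz, hax], hz⟩
      · rintro ⟨z, hzx, hza⟩
        exact ⟨(hmemD a).mpr ⟨z, hza⟩, by rw [← hza, hg1 z, hzx]⟩
    have hcardfib : (univ.filter (fun z : X × Fin n => z.1 = x)).card = n := by
      have hcb : (univ.filter (fun z : X × Fin n => z.1 = x)).card
          = (univ : Finset (Fin n)).card := by
        refine Finset.card_bij' (fun (z : X × Fin n) (_ : z ∈ univ.filter (fun z : X × Fin n => z.1 = x)) => z.2)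
          (fun (i : Fin n) (_ : i ∈ (univ : Finset (Fin n))) => ((x, i) : X × Fin n)) ?_ ?_ ?_ ?_
        · intro z hz; exact mem_univ _
        · intro i _; exact mem_filter.mpr ⟨mem_univ _, rfl⟩
        · intro z hz; exact Prod.ext ((mem_filter.mp hz).2.symm) rfl
        · intro i _; rfl
      rw [hcb, card_univ, Fintype.card_fin]
    rw [heq, Finset.card_image_of_injective _ hginj, hcardfib]
  -- in-degree n
  have hin : ∀ x, (D.filter (fun p => p.2 = x)).card = n := by
    intro x
    set O : Finset X := (D.filter (fun p => p.1 = x)).image Prod.snd with hO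
    set I : Finset X := (D.filter (fun p => p.2 = x)).image Prod.fst with hI
    have hOc : O.card = n := by
      rw [hO, Finset.card_image_of_injOn, hout x]
      intro a ha b hb hab
      exact Prod.ext ((mem_filter.mp ha).2.trans (mem_filter.mp hb).2.symm) hab
    have hIc : I.card = (D.filter (fun p => p.2 = x)).card := by
      rw [hI, Finset.card_image_of_injOn]
      intro a ha b hb hab
      exact Prod.ext hab ((mem_filter.mp ha).2.trans (mem_filter.mp hb).2.symm)
    have hOmem : ∀ y, y ∈ O ↔ (x, y) ∈ D := by
      intro y
      rw [hO]
      simp only [mem_image, mem_filter]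
      constructor
      · rintro ⟨a, ⟨haD, hax⟩, hay⟩
        exact (Prod.ext hax hay : a = (x, y)) ▸ haD
      · intro h
        exact ⟨(x, y), ⟨h, rfl⟩, rfl⟩
    have hImem : ∀ y, y ∈ I ↔ (y, x) ∈ D := by
      intro y
      rw [hI]
      simp only [mem_image, mem_filter]
      constructor
      · rintro ⟨a, ⟨haD, hax⟩, hay⟩
        exact (Prod.ext hay hax : a = (y, x)) ▸ haD
      · intro h
        exact ⟨(y, x), ⟨h, rfl⟩, rfl⟩
    have hunion : univ.filter (fun y => (x, y) ∈ AF) = O ∪ I := by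
      ext y
      simp only [mem_filter, mem_univ, true_and, mem_union, hOmem, hImem]
      constructor
      · intro h
        exact hcover (x, y) h
      · rintro (h | h)
        · exact hDA _ h
        · exact hsym _ (hDA _ h)
    have hdisj : Disjoint O I := by
      rw [Finset.disjoint_left]
      intro y hyO hyI
      exact hrev _ ((hOmem y).mp hyO) ((hImem y).mp hyI)
    have := hreg x
    rw [hunion, Finset.card_union_of_disjoint hdisj, hOc, hIc] at this
    omega
  exact ⟨D, hDA, hcover, hrev, hout, hin⟩



/-- every finite simple regular graph of even valency 2n (n ≥ 1) is DA(X,S)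
for some closed self-inverse S ⊆ Der(X). -/
theorem stmt8 {X : Type*} [Fintype X] (A : Set (X × X)) (n : ℕ) (hn : 1 ≤ n)
    (hsimple : ∀ p ∈ A, p.1 ≠ p.2)
    (hsym : ∀ p ∈ A, (Prod.snd p, Prod.fst p) ∈ A)
    (hreg : ∀ x : X, {y : X | (x, y) ∈ A}.ncard = 2 * n) :
    ∃ S : Set (Equiv.Perm X),
      (∀ s ∈ S, ∀ x : X, s x ≠ x) ∧
      (∀ s : Equiv.Perm X, s ∈ S ↔ s⁻¹ ∈ S) ∧
      (∀ x : X, {y : X | ∃ s ∈ S, s x = y} = {y : X | ∃ s ∈ S, s⁻¹ x = y}) ∧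
      (∀ s ∈ S, ∀ t ∈ S, s * t⁻¹ = 1 ∨ ∀ x : X, (s * t⁻¹) x ≠ x) ∧
      A = {p : X × X | ∃ s ∈ S, s p.1 = p.2} := by
  classical
  set AF : Finset (X × X) := Finset.univ.filter (fun p => p ∈ A) with hAF
  have hmemAF : ∀ p : X × X, p ∈ AF ↔ p ∈ A := by intro p; simp [hAF]
  have hsimple' : ∀ p ∈ AF, p.1 ≠ p.2 := fun p hp => hsimple p ((hmemAF p).mp hp)
  have hsym' : ∀ p ∈ AF, (p.2, p.1) ∈ AF := fun p hp =>
    (hmemAF _).mpr (hsym p ((hmemAF p).mp hp))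
  have hreg' : ∀ x : X, (Finset.univ.filter (fun y => (x, y) ∈ AF)).card = 2 * n := by
    intro x
    have h1 : {y : X | (x, y) ∈ A}.ncard = (Finset.univ.filter (fun y => (x, y) ∈ A)).card := by
      rw [Set.ncard_eq_toFinset_card']
      congr 1
      ext y
      simp
    have h2 : Finset.univ.filter (fun y => (x, y) ∈ AF)
        = Finset.univ.filter (fun y => (x, y) ∈ A) := by
      apply Finset.filter_congr
      intro y _
      simp [hmemAF]
    rw [h2, ← h1, hreg x]
  obtain ⟨D, hDA, hcover, hrev, hout, hin⟩ := orient AF n hsimple' hsym' hreg'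
  obtain ⟨S0, hfpf, hpair, harcs⟩ := decomp n D (fun p hp => hsimple' p (hDA p hp)) hout hin
  refine ⟨{s | s ∈ S0 ∨ s⁻¹ ∈ S0}, ?_, ?_, ?_, ?_, ?_⟩
  · rintro s (hs | hs) x
    · exact hfpf s hs x
    · intro hfix
      exact hfpf s⁻¹ hs x (Equiv.Perm.inv_eq_iff_eq.mpr hfix.symm)
  · intro s
    simp only [Set.mem_setOf_eq, inv_inv]
    exact or_comm
  · intro x
    have hSinv : ∀ s : Equiv.Perm X, (s ∈ S0 ∨ s⁻¹ ∈ S0) → (s⁻¹ ∈ S0 ∨ (s⁻¹)⁻¹ ∈ S0) := by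
      intro s hs
      rw [inv_inv]
      exact hs.symm
    ext y
    simp only [Set.mem_setOf_eq]
    constructor
    · rintro ⟨s, hs, hsx⟩
      exact ⟨s⁻¹, hSinv s hs, by rw [inv_inv]; exact hsx⟩
    · rintro ⟨s, hs, hsx⟩
      exact ⟨s⁻¹, hSinv s hs, hsx⟩
  · intro s hs t ht
    simp only [Set.mem_setOf_eq] at hs ht
    rcases em (∀ x : X, (s * t⁻¹) x ≠ x) with h | h
    · exact Or.inr h
    push_neg at h
    obtain ⟨x, hx⟩ := h
    left
    have hx' : s (t⁻¹ x) = x := hx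
    rcases hs with hs | hs <;> rcases ht with ht | ht
    · have hst : s = t := hpair s hs t ht (t⁻¹ x)
        (hx'.trans (t.apply_symm_apply x).symm)
      rw [hst, mul_inv_cancel]
    · exfalso
      have h1 : (x, t⁻¹ x) ∈ D := (harcs (x, t⁻¹ x)).mpr ⟨t⁻¹, ht, rfl⟩
      have h2 : (t⁻¹ x, x) ∈ D := (harcs (t⁻¹ x, x)).mpr ⟨s, hs, hx'⟩
      exact hrev _ h1 h2
    · exfalso
      have hyx : t⁻¹ x = s⁻¹ x := by
        have h2 := congrArg (fun w => s⁻¹ w) hx'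
        simpa using h2
      have h1 : (x, s⁻¹ x) ∈ D := (harcs (x, s⁻¹ x)).mpr ⟨s⁻¹, hs, rfl⟩
      have h2 : (s⁻¹ x, x) ∈ D := (harcs (s⁻¹ x, x)).mpr ⟨t, ht, by
        rw [← hyx]; exact t.apply_symm_apply x⟩
      exact hrev _ h1 h2
    · have hyx : s⁻¹ x = t⁻¹ x := by
        have h2 := congrArg (fun w => s⁻¹ w) hx'
        simpa using h2.symm
      have hst : s⁻¹ = t⁻¹ := hpair s⁻¹ hs t⁻¹ ht x hyx
      rw [inv_injective hst, mul_inv_cancel]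
  · ext p
    simp only [Set.mem_setOf_eq]
    constructor
    · intro hp
      rcases hcover p ((hmemAF p).mpr hp) with h | h
      · obtain ⟨σ, hσ, hσp⟩ := (harcs p).mp h
        exact ⟨σ, Or.inl hσ, hσp⟩
      · obtain ⟨σ, hσ, hσp⟩ := (harcs (p.2, p.1)).mp h
        refine ⟨σ⁻¹, Or.inr (by simpa using hσ), ?_⟩
        simp only at hσp
        rw [← hσp]; exact σ.symm_apply_apply _
    · rintro ⟨s, hs, hsp⟩
      rcases hs with hs | hs
      · have hdd : p ∈ D := (harcs p).mpr ⟨s, hs, hsp⟩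
        exact (hmemAF p).mp (hDA p hdd)
      · have hdd : (p.2, p.1) ∈ D := (harcs (p.2, p.1)).mpr ⟨s⁻¹, hs, by
          simp only
          rw [← hsp]; exact s.symm_apply_apply _⟩
        have hAA := hsym _ ((hmemAF _).mp (hDA _ hdd))
        simpa using hAA
end

section
/- Let Γ = (X,A) be a finite simple graph of odd valency k that equals DA(X,S) for some closed self-inverse subset S ⊆ Der(X). Then Γ has a perfect matching; in particular S contains an involution s with s = s^{-1}, and DA(X,{s}) is a perfect matching of Γ. -/
/-- if the finite simple graph Γ = DA(X,S), with S a closed self-inverse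
subset of Der(X) of odd cardinality (so Γ has odd valency |S|), then S contains an
involution s, and DA(X,{s}) is a perfect matching of Γ. -/
theorem stmt10 {X : Type*} [Fintype X] (S : Finset (Equiv.Perm X))
    (hDer : ∀ s ∈ S, ∀ x : X, s x ≠ x)
    (hinv : ∀ s ∈ S, s⁻¹ ∈ S)
    (hclosed1 : ∀ x : X, {y : X | ∃ s ∈ S, s x = y} = {y : X | ∃ s ∈ S, s⁻¹ x = y})
    (hclosed2 : ∀ s ∈ S, ∀ t ∈ S, s * t⁻¹ = 1 ∨ ∀ x : X, (s * t⁻¹) x ≠ x)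
    (hodd : Odd S.card) :
    ∃ s ∈ S, s⁻¹ = s ∧
      {p : X × X | s p.1 = p.2} ⊆ {p : X × X | ∃ t ∈ S, t p.1 = p.2} ∧
      (∀ p : X × X, s p.1 = p.2 → s p.2 = p.1) ∧
      (∀ x : X, ∃! y : X, s x = y) := by
  have hex : ∃ s ∈ S, s⁻¹ = s := by
    by_contra h
    push_neg at h
    have : ∏ _x ∈ S, (-1 : ℤ) = 1 :=
      Finset.prod_involution (fun a _ => a⁻¹) (by intros; ring)
        (fun a ha _ => h a ha) (fun a ha => hinv a ha) (fun a _ => inv_inv a)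
    rw [Finset.prod_const] at this
    have := (Odd.neg_one_pow hodd : (-1 : ℤ) ^ S.card = -1)
    omega
  obtain ⟨s, hs, hss⟩ := hex
  refine ⟨s, hs, hss, ?_, ?_, ?_⟩
  · rintro ⟨x, y⟩ hp
    exact ⟨s, hs, hp⟩
  · rintro ⟨x, y⟩ hp
    simp only [Set.mem_setOf_eq] at hp ⊢
    rw [← hp, ← Equiv.Perm.eq_inv_iff_eq, hss]
  · intro x
    exact ⟨s x, rfl, fun y hy => hy.symm⟩
end

section
/- Every finite regular bipartite simple graph can be expressed as DA(X,S) for some closed, self-inverse subset S ⊆ Der(X). -/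
open Finset

/-- A perfect matching (as a fixed-point-free-or-not involution whose graph lies in `A`)
exists in any finite regular bipartite graph. -/
theorem stmt12_matching {X : Type*} [Fintype X] (A : Set (X × X)) (k : ℕ) (hk : 1 ≤ k)
    (hsym : ∀ p ∈ A, (Prod.snd p, Prod.fst p) ∈ A)
    (hreg : ∀ x : X, {y : X | (x, y) ∈ A}.ncard = k)
    (hbip : ∃ P : X → Prop, ∀ p ∈ A, (P p.1 ↔ ¬ P p.2)) :
    ∃ σ : Equiv.Perm X, (∀ x, σ (σ x) = x) ∧ (∀ x, (x, σ x) ∈ A) := by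
  classical
  obtain ⟨P, hP⟩ := hbip
  set N : X → Finset X := fun x => univ.filter (fun y => (x, y) ∈ A) with hN
  have hmemN : ∀ x y, y ∈ N x ↔ (x, y) ∈ A := by
    intro x y; simp [hN]
  have hNcard : ∀ x, (N x).card = k := by
    intro x
    have h1 := hreg x
    have h2 : {y : X | (x, y) ∈ A} = ↑(N x) := by
      ext y; simp [hN]
    rw [h2, Set.ncard_coe_finset] at h1
    exact h1
  -- Hall condition
  have hall : ∀ s : Finset X, s.card ≤ (s.biUnion N).card := by
    intro s
    set B := s.biUnion N with hB
    set E := (s ×ˢ B).filter (fun p => p.2 ∈ N p.1) with hE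
    have h1 : E.card = s.card * k := by
      have hfib : ∀ p ∈ E, p.1 ∈ s := by
        intro p hp
        rw [hE, mem_filter, mem_product] at hp
        exact hp.1.1
      rw [Finset.card_eq_sum_card_fiberwise hfib]
      have : ∀ x ∈ s, (E.filter (fun p => p.1 = x)).card = k := by
        intro x hx
        have hsub : N x ⊆ B := by
          intro y hy
          rw [hB, mem_biUnion]
          exact ⟨x, hx, hy⟩
        have : E.filter (fun p => p.1 = x) = {x} ×ˢ N x := by
          ext p
          rw [hE, mem_filter, mem_filter, mem_product, mem_product, mem_singleton]
          constructor
          · rintro ⟨⟨_, hNp⟩, h⟩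
            exact ⟨h, h ▸ hNp⟩
          · rintro ⟨h1, h2⟩
            subst h1
            exact ⟨⟨⟨hx, hsub h2⟩, h2⟩, rfl⟩
        rw [this, Finset.card_product, Finset.card_singleton, one_mul, hNcard]
      rw [Finset.sum_congr rfl this, Finset.sum_const, smul_eq_mul]
    have h2 : E.card ≤ B.card * k := by
      have hfib : ∀ p ∈ E, p.2 ∈ B := by
        intro p hp
        rw [hE, mem_filter, mem_product] at hp
        exact hp.1.2
      rw [Finset.card_eq_sum_card_fiberwise hfib]
      have hle : ∀ y ∈ B, (E.filter (fun p => p.2 = y)).card ≤ k := by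
        intro y _
        rw [← hNcard y]
        apply Finset.card_le_card_of_injOn (fun p => p.1)
        · intro p hp
          rw [mem_coe, mem_filter, hE, mem_filter] at hp
          obtain ⟨⟨_, hpN⟩, hpy⟩ := hp
          rw [mem_coe]
          rw [hmemN] at hpN ⊢
          have := hsym _ hpN
          rwa [hpy] at this
        · intro p hp q hq hpq
          rw [mem_coe, mem_filter] at hp hq
          exact Prod.ext hpq (hp.2.trans hq.2.symm)
      calc ∑ y ∈ B, (E.filter (fun p => p.2 = y)).card ≤ ∑ _y ∈ B, k :=
            Finset.sum_le_sum hle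
        _ = B.card * k := by rw [Finset.sum_const, smul_eq_mul]
    have := h1 ▸ h2
    exact Nat.le_of_mul_le_mul_right this hk
  obtain ⟨f, hfinj, hfN⟩ := (Finset.all_card_le_biUnion_card_iff_exists_injective N).mp hall
  have hfA : ∀ x, (x, f x) ∈ A := fun x => (hmemN x (f x)).mp (hfN x)
  have hfbij : Function.Bijective f := Finite.injective_iff_bijective.mp hfinj
  set e : Equiv.Perm X := Equiv.ofBijective f hfbij with he
  have heapp : ∀ x, e x = f x := fun x => rfl
  have hsymmA : ∀ x, (e.symm x, x) ∈ A := by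
    intro x
    have := hfA (e.symm x)
    rwa [← heapp, Equiv.apply_symm_apply] at this
  set g : X → X := fun x => if P x then e x else e.symm x with hg
  have hinvol : Function.Involutive g := by
    intro x
    by_cases hx : P x
    · have hne : ¬ P (e x) := by
        have := hP _ (hfA x)
        rw [← heapp] at this
        exact this.mp hx
      have h1 : g x = e x := by simp [hg, hx]
      have h2 : g (e x) = e.symm (e x) := by simp [hg, hne]
      show g (g x) = x
      rw [h1, h2, Equiv.symm_apply_apply]
    · have hpe : P (e.symm x) := (hP _ (hsymmA x)).mpr hx
      have h1 : g x = e.symm x := by simp [hg, hx]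
      have h2 : g (e.symm x) = e (e.symm x) := by simp [hg, hpe]
      show g (g x) = x
      rw [h1, h2, Equiv.apply_symm_apply]
  refine ⟨hinvol.toPerm g, fun x => hinvol x, fun x => ?_⟩
  show (x, g x) ∈ A
  by_cases hx : P x
  · rw [hg]; simp only [if_pos hx]; rw [heapp]; exact hfA x
  · rw [hg]; simp only [if_neg hx]
    exact hsym _ (hsymmA x)

/-- Decomposition of a regular bipartite graph into edge-disjoint perfect matchings. -/
theorem stmt12_decomp {X : Type*} [Fintype X] : ∀ (k : ℕ) (A : Set (X × X)),
    (∀ p ∈ A, p.1 ≠ p.2) → (∀ p ∈ A, (Prod.snd p, Prod.fst p) ∈ A) →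
    (∀ x : X, {y : X | (x, y) ∈ A}.ncard = k) →
    (∃ P : X → Prop, ∀ p ∈ A, (P p.1 ↔ ¬ P p.2)) →
    ∃ L : Finset (Equiv.Perm X),
      (∀ s ∈ L, s⁻¹ = s) ∧
      (∀ s ∈ L, ∀ t ∈ L, s ≠ t → ∀ x, s x ≠ t x) ∧
      A = {p : X × X | ∃ s ∈ L, s p.1 = p.2} := by
  classical
  intro k
  induction k with
  | zero =>
    intro A _ _ hreg _
    refine ⟨∅, by simp, by simp, ?_⟩
    have hempty : A = ∅ := by
      ext p
      simp only [Set.mem_empty_iff_false, iff_false]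
      intro hp
      have h0 := hreg p.1
      have : {y : X | (p.1, y) ∈ A} = ∅ :=
        Set.ncard_eq_zero (Set.toFinite _) |>.mp h0
      have : p.2 ∈ {y : X | (p.1, y) ∈ A} := hp
      simp_all
    rw [hempty]
    ext p; simp
  | succ k ih =>
    intro A hsimple hsym hreg hbip
    obtain ⟨σ, hσinv, hσA⟩ := stmt12_matching A (k + 1) (Nat.succ_le_succ (Nat.zero_le k))
      hsym hreg hbip
    set G : Set (X × X) := {p | σ p.1 = p.2} with hG
    set A' := A \ G with hA'
    have hA'sub : A' ⊆ A := Set.diff_subset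
    have hsimple' : ∀ p ∈ A', p.1 ≠ p.2 := fun p hp => hsimple p (hA'sub hp)
    have hsym' : ∀ p ∈ A', (Prod.snd p, Prod.fst p) ∈ A' := by
      rintro p ⟨hpA, hpG⟩
      refine ⟨hsym p hpA, ?_⟩
      intro hcon
      apply hpG
      show σ p.1 = p.2
      have : σ p.2 = p.1 := hcon
      rw [← this, hσinv]
    have hreg' : ∀ x : X, {y : X | (x, y) ∈ A'}.ncard = k := by
      intro x
      have hset : {y : X | (x, y) ∈ A'} = {y : X | (x, y) ∈ A} \ {σ x} := by
        ext y
        simp only [hA', hG, Set.mem_diff, Set.mem_setOf_eq, Set.mem_singleton_iff]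
        constructor
        · rintro ⟨h1, h2⟩; exact ⟨h1, fun h => h2 h.symm⟩
        · rintro ⟨h1, h2⟩; exact ⟨h1, fun h => h2 h.symm⟩
      rw [hset, Set.ncard_diff_singleton_of_mem (show σ x ∈ {y : X | (x, y) ∈ A} from hσA x), hreg x]
      omega
    have hbip' : ∃ P : X → Prop, ∀ p ∈ A', (P p.1 ↔ ¬ P p.2) := by
      obtain ⟨P, hP⟩ := hbip
      exact ⟨P, fun p hp => hP p (hA'sub hp)⟩
    obtain ⟨L', hL'inv, hL'dis, hL'eq⟩ := ih A' hsimple' hsym' hreg' hbip'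
    have hσselfinv : σ⁻¹ = σ := by
      ext x
      conv_lhs => rw [← hσinv x]
      exact Equiv.symm_apply_apply σ _
    have hdisσ : ∀ t ∈ L', ∀ x, σ x ≠ t x := by
      intro t ht x hcon
      have : (x, t x) ∈ A' := by
        rw [hL'eq]; exact ⟨t, ht, rfl⟩
      exact this.2 hcon
    refine ⟨insert σ L', ?_, ?_, ?_⟩
    · intro s hs
      rcases Finset.mem_insert.mp hs with h | h
      · rw [h]; exact hσselfinv
      · exact hL'inv s h
    · intro s hs t ht hst x
      rcases Finset.mem_insert.mp hs with h | h <;>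
        rcases Finset.mem_insert.mp ht with h' | h'
      · exact absurd (h.trans h'.symm) hst
      · rw [h]; exact hdisσ t h' x
      · rw [h']; exact fun hc => hdisσ s h x hc.symm
      · exact hL'dis s h t h' hst x
    · ext p
      simp only [Set.mem_setOf_eq, Finset.mem_insert]
      constructor
      · intro hp
        by_cases hpg : σ p.1 = p.2
        · exact ⟨σ, Or.inl rfl, hpg⟩
        · have : p ∈ A' := ⟨hp, hpg⟩
          rw [hL'eq] at this
          obtain ⟨s, hs, hsp⟩ := this
          exact ⟨s, Or.inr hs, hsp⟩
      · rintro ⟨s, hs | hs, hsp⟩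
        · have h := hσA p.1
          rw [← hs, hsp] at h
          rwa [Prod.mk.eta] at h
        · have : p ∈ A' := by
            rw [hL'eq]; exact ⟨s, hs, hsp⟩
          exact hA'sub this

/-- every finite regular bipartite simple graph (of positive valency) is
DA(X,S) for some closed self-inverse S ⊆ Der(X). -/
theorem stmt12 {X : Type*} [Fintype X] (A : Set (X × X)) (k : ℕ) (hk : 1 ≤ k)
    (hsimple : ∀ p ∈ A, p.1 ≠ p.2)
    (hsym : ∀ p ∈ A, (Prod.snd p, Prod.fst p) ∈ A)
    (hreg : ∀ x : X, {y : X | (x, y) ∈ A}.ncard = k)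
    (hbip : ∃ P : X → Prop, ∀ p ∈ A, (P p.1 ↔ ¬ P p.2)) :
    ∃ S : Set (Equiv.Perm X),
      (∀ s ∈ S, ∀ x : X, s x ≠ x) ∧
      (∀ s : Equiv.Perm X, s ∈ S ↔ s⁻¹ ∈ S) ∧
      (∀ x : X, {y : X | ∃ s ∈ S, s x = y} = {y : X | ∃ s ∈ S, s⁻¹ x = y}) ∧
      (∀ s ∈ S, ∀ t ∈ S, s * t⁻¹ = 1 ∨ ∀ x : X, (s * t⁻¹) x ≠ x) ∧
      A = {p : X × X | ∃ s ∈ S, s p.1 = p.2} := by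
  obtain ⟨L, hLinv, hLdis, hLeq⟩ := stmt12_decomp k A hsimple hsym hreg hbip
  refine ⟨↑L, ?_, ?_, ?_, ?_, ?_⟩
  · intro s hs x
    have : (x, s x) ∈ A := by
      rw [hLeq]; exact ⟨s, hs, rfl⟩
    exact fun hc => hsimple _ this (hc.symm ▸ rfl : (x : X) = s x) |>.elim
  · intro s
    constructor
    · intro hs; rw [hLinv s hs]; exact hs
    · intro hs
      have := hLinv s⁻¹ hs
      rw [inv_inv] at this
      rw [this]; exact hs
  · intro x
    ext y
    simp only [Set.mem_setOf_eq]
    constructor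
    · rintro ⟨s, hs, h⟩; exact ⟨s, hs, by rw [hLinv s hs]; exact h⟩
    · rintro ⟨s, hs, h⟩; exact ⟨s, hs, by rw [← hLinv s hs]; exact h⟩
  · intro s hs t ht
    by_cases hst : s = t
    · left; rw [hst, mul_inv_cancel]
    · right
      intro x hcon
      have h1 : s (t⁻¹ x) = x := hcon
      rw [hLinv t ht] at h1
      have h2 : t (t x) = x := by
        have h3 : t⁻¹ (t x) = x := Equiv.symm_apply_apply t x
        rwa [hLinv t ht] at h3
      exact hLdis s hs t ht hst (t x) (h1.trans h2.symm)
  · rw [hLeq]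
    ext p
    simp [Finset.mem_coe]
end

section
/- Let S ⊆ Der(X) be nonempty with every element of S of finite order on each point (no infinite cycles). Then the connectivity equivalence classes of DA(X,S) are exactly the orbits of the subgroup ⟨S⟩ of Sym(X) generated by S. -/
/-- the connectivity classes of DA(X,S) are exactly the orbits of ⟨S⟩. -/
theorem stmt15 {X : Type*} (S : Set (Equiv.Perm X)) (hne : S.Nonempty)
    (hDer : ∀ s ∈ S, ∀ x : X, s x ≠ x)
    (hfin : ∀ s ∈ S, ∀ x : X, ∃ n : ℕ, 1 ≤ n ∧ (s ^ n) x = x) :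
    ∀ x y : X, Relation.ReflTransGen (fun a b : X => ∃ s ∈ S, s a = b) x y ↔
      y ∈ MulAction.orbit (Subgroup.closure S) x := by
  set R := Relation.ReflTransGen (fun a b : X => ∃ s ∈ S, s a = b) with hR
  have hpow : ∀ s ∈ S, ∀ (x : X) (k : ℕ), R x ((s ^ k) x) := by
    intro s hs x k
    induction k with
    | zero => exact Relation.ReflTransGen.refl
    | succ n ih =>
      refine ih.tail ⟨s, hs, ?_⟩
      rw [pow_succ', Equiv.Perm.mul_apply]
  have hinv : ∀ s ∈ S, ∀ x : X, R x (s⁻¹ x) := by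
    intro s hs x
    obtain ⟨n, hn1, hn⟩ := hfin s hs x
    have : s⁻¹ x = (s ^ (n - 1)) x := by
      apply (Equiv.injective s)
      have : s ((s ^ (n - 1)) x) = (s ^ n) x := by
        rw [← Equiv.Perm.mul_apply, ← pow_succ']
        congr 2
        omega
      simp [this, hn]
    rw [this]
    exact hpow s hs x (n - 1)
  have key : ∀ g ∈ Subgroup.closure S, ∀ x : X, R x (g x) ∧ R x (g⁻¹ x) := by
    intro g hg
    induction hg using Subgroup.closure_induction with
    | mem s hs =>
      intro x
      exact ⟨Relation.ReflTransGen.single ⟨s, hs, rfl⟩, hinv s hs x⟩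
    | one => intro x; constructor <;> exact Relation.ReflTransGen.refl
    | mul g h _ _ ihg ihh =>
      intro x
      constructor
      · have h1 := (ihh x).1
        have h2 := (ihg (h x)).1
        exact h1.trans (by simpa using h2)
      · have h1 := (ihg x).2
        have h2 := (ihh (g⁻¹ x)).2
        refine h1.trans ?_
        simpa [mul_inv_rev] using h2
    | inv g _ ihg =>
      intro x
      exact ⟨(ihg x).2, by simpa using (ihg x).1⟩
  intro x y
  constructor
  · intro h
    induction h with
    | refl => exact ⟨1, by simp⟩
    | tail _ hstep ih =>
      obtain ⟨g, rfl⟩ := ih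
      obtain ⟨s, hs, rfl⟩ := hstep
      refine ⟨⟨s, Subgroup.subset_closure hs⟩ * g, rfl⟩
  · rintro ⟨⟨g, hg⟩, rfl⟩
    exact (key g hg x).1
end
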